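/- Fix positive integers n, m, real n×n matrices A and L with L symmetric, a real n×m matrix B, reals q and r with r > 0, and a function x̄ : ℝ → ℝⁿ. Let Γ : ℝ → (n×n real matrices) and β : ℝ → ℝⁿ be differentiable with Γ(t) symmetric for all t, satisfying Γ' = (1/r)·Γ B Bᵀ Γ − Γ A − Aᵀ Γ − q·I and β' = ((1/r)·Γ B Bᵀ − Aᵀ) β − q·L x̄. Let x̂ : ℝ → ℝⁿ be differentiable with x̂' = A x̂ − (1/r)·B Bᵀ(Γ x̂ + β), define û(t) = −(1/r)·Bᵀ(Γ(t) x̂(t) + β(t)), and let x : ℝ → ℝⁿ be differentiable with x' = A x + B u for some u : ℝ → ℝᵐ. Set x̃ = x − x̂ and ũ = u − û. Then for every t, the function t ↦ ⟪x̃(t), Γ(t) x̂(t) + β(t)⟫ is differentiable with derivative −r·⟪ũ(t), û(t)⟫ − q·⟪x̃(t), x̂(t) + L x̄(t)⟫. -/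

import Mathlib

open scoped RealInnerProductSpace Matrix

attribute [local instance] Matrix.normedAddCommGroup Matrix.normedSpace

lemma teL_mul {a b c : ℕ} (M : Matrix (Fin a) (Fin b) ℝ) (N : Matrix (Fin b) (Fin c) ℝ)
    (v : EuclideanSpace ℝ (Fin c)) :
    Matrix.toEuclideanLin (M * N) v = Matrix.toEuclideanLin M (Matrix.toEuclideanLin N v) := by
  simp [Matrix.toEuclideanLin_apply, Matrix.mulVec_mulVec]

lemma teL_one {a : ℕ} (v : EuclideanSpace ℝ (Fin a)) :
    Matrix.toEuclideanLin (1 : Matrix (Fin a) (Fin a) ℝ) v = v := by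
  simp [Matrix.toEuclideanLin_apply]

lemma teL_adj {a b : ℕ} (M : Matrix (Fin a) (Fin b) ℝ) (x : EuclideanSpace ℝ (Fin b))
    (y : EuclideanSpace ℝ (Fin a)) :
    ⟪Matrix.toEuclideanLin M x, y⟫ = ⟪x, Matrix.toEuclideanLin Mᵀ y⟫ := by
  have h : (Mᵀ : Matrix (Fin b) (Fin a) ℝ) = Mᴴ := by
    ext i j; simp [Matrix.conjTranspose_apply]
  rw [h, Matrix.toEuclideanLin_conjTranspose_eq_adjoint, LinearMap.adjoint_inner_right]

/-- `toEuclideanLin` packaged as a linear map into continuous linear maps. -/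
noncomputable def teLL (n : ℕ) : Matrix (Fin n) (Fin n) ℝ →ₗ[ℝ]
    (EuclideanSpace ℝ (Fin n) →L[ℝ] EuclideanSpace ℝ (Fin n)) where
  toFun M := LinearMap.toContinuousLinearMap (Matrix.toEuclideanLin M)
  map_add' M N := by ext v; simp
  map_smul' c M := by ext v; simp

/-- The continuous version. -/
noncomputable def teLC (n : ℕ) : Matrix (Fin n) (Fin n) ℝ →L[ℝ]
    (EuclideanSpace ℝ (Fin n) →L[ℝ] EuclideanSpace ℝ (Fin n)) :=
  LinearMap.toContinuousLinearMap (teLL n)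

@[simp] lemma teLC_apply {n : ℕ} (M : Matrix (Fin n) (Fin n) ℝ) (v : EuclideanSpace ℝ (Fin n)) :
    teLC n M v = Matrix.toEuclideanLin M v := rfl


set_option maxHeartbeats 1000000 in
/-- Adjoint-variable identity: along the difference `x̃ = x − x̂` between an arbitrary
admissible trajectory and the closed-loop mean-field trajectory,
`d/dt ⟪x̃, Γ x̂ + β⟫ = −r⟪ũ, û⟫ − q⟪x̃, x̂ + L x̄⟫`, where `ũ = u − û` and
`û = −(1/r)Bᵀ(Γ x̂ + β)`. -/
theorem adjoint_variable_identity (n m : ℕ) (hn : 0 < n) (hm : 0 < m)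
    (A L : Matrix (Fin n) (Fin n) ℝ) (hL : L.IsSymm)
    (B : Matrix (Fin n) (Fin m) ℝ) (q r : ℝ) (hr : 0 < r)
    (xbar : ℝ → EuclideanSpace ℝ (Fin n))
    (Γ : ℝ → Matrix (Fin n) (Fin n) ℝ) (β : ℝ → EuclideanSpace ℝ (Fin n))
    (hΓs : ∀ t : ℝ, (Γ t).IsSymm)
    (hΓ : ∀ t : ℝ, HasDerivAt Γ
      ((1 / r) • (Γ t * B * Bᵀ * Γ t) - Γ t * A - Aᵀ * Γ t -
        q • (1 : Matrix (Fin n) (Fin n) ℝ)) t)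
    (hβ : ∀ t : ℝ, HasDerivAt β
      (Matrix.toEuclideanLin ((1 / r) • (Γ t * B * Bᵀ) - Aᵀ) (β t) -
        q • Matrix.toEuclideanLin L (xbar t)) t)
    (xhat : ℝ → EuclideanSpace ℝ (Fin n))
    (hxhat : ∀ t : ℝ, HasDerivAt xhat
      (Matrix.toEuclideanLin A (xhat t) -
        (1 / r) • Matrix.toEuclideanLin (B * Bᵀ)
          (Matrix.toEuclideanLin (Γ t) (xhat t) + β t)) t)
    (u : ℝ → EuclideanSpace ℝ (Fin m)) (x : ℝ → EuclideanSpace ℝ (Fin n))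
    (hx : ∀ t : ℝ, HasDerivAt x
      (Matrix.toEuclideanLin A (x t) + Matrix.toEuclideanLin B (u t)) t)
    (t : ℝ) :
    HasDerivAt
      (fun s : ℝ => ⟪x s - xhat s, Matrix.toEuclideanLin (Γ s) (xhat s) + β s⟫)
      (-r * ⟪u t - (-(1 / r)) •
            Matrix.toEuclideanLin Bᵀ (Matrix.toEuclideanLin (Γ t) (xhat t) + β t),
          (-(1 / r)) •
            Matrix.toEuclideanLin Bᵀ (Matrix.toEuclideanLin (Γ t) (xhat t) + β t)⟫ -
        q * ⟪x t - xhat t, xhat t + Matrix.toEuclideanLin L (xbar t)⟫) t := by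
  have hΓc := (teLC n).hasFDerivAt.comp_hasDerivAt t (hΓ t)
  have hp := (hΓc.clm_apply (hxhat t)).add (hβ t)
  have key := ((hx t).sub (hxhat t)).inner ℝ hp
  have key2 : HasDerivAt
      (fun s : ℝ => ⟪x s - xhat s, Matrix.toEuclideanLin (Γ s) (xhat s) + β s⟫) _ t := key
  convert key2 using 1
  set p : EuclideanSpace ℝ (Fin n) := Matrix.toEuclideanLin (Γ t) (xhat t) + β t with hpdef
  set xt : EuclideanSpace ℝ (Fin n) := x t - xhat t with hxt
  have hr' : r ≠ 0 := ne_of_gt hr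
  have claim1 : teLC n ((1 / r) • (Γ t * B * Bᵀ * Γ t) - Γ t * A - Aᵀ * Γ t -
        q • (1 : Matrix (Fin n) (Fin n) ℝ)) (xhat t) +
      teLC n (Γ t) (Matrix.toEuclideanLin A (xhat t) -
        (1 / r) • Matrix.toEuclideanLin (B * Bᵀ) p) +
      (Matrix.toEuclideanLin ((1 / r) • (Γ t * B * Bᵀ) - Aᵀ) (β t) -
        q • Matrix.toEuclideanLin L (xbar t)) =
      -(Matrix.toEuclideanLin Aᵀ p) -
        q • (xhat t + Matrix.toEuclideanLin L (xbar t)) := by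
    simp only [hpdef, map_sub, map_add, map_smul, ContinuousLinearMap.sub_apply,
      ContinuousLinearMap.add_apply, ContinuousLinearMap.smul_apply, teLC_apply,
      LinearMap.sub_apply, LinearMap.add_apply, LinearMap.smul_apply, teL_mul, teL_one]
    module
  have claim2 : (Matrix.toEuclideanLin A (x t) + Matrix.toEuclideanLin B (u t)) -
      (Matrix.toEuclideanLin A (xhat t) -
        (1 / r) • Matrix.toEuclideanLin (B * Bᵀ) p) =
      Matrix.toEuclideanLin A xt +
        Matrix.toEuclideanLin B (u t - (-(1 / r)) • Matrix.toEuclideanLin Bᵀ p) := by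
    simp only [hpdef, hxt, map_sub, map_add, map_smul, LinearMap.sub_apply,
      LinearMap.add_apply, LinearMap.smul_apply, teL_mul, neg_smul, map_neg]
    module
  simp only [Function.comp_apply]
  erw [claim1, claim2]
  rw [inner_sub_right, inner_neg_right, real_inner_smul_right, inner_add_left,
    teL_adj A, teL_adj B, real_inner_smul_right]
  simp only [teLC_apply, ← hpdef]
  have hinv : r * (1 / r) = 1 := by field_simp
  linear_combination
    ⟪u t - -(1 / r) • Matrix.toEuclideanLin Bᵀ p, Matrix.toEuclideanLin Bᵀ p⟫ * hinv
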